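/- (Lemma 5.5, strong positivity of S₁, S₂ and S). Let H, G be real Hilbert spaces, K = H × G, L : H → G bounded linear, γ₁, γ₂ > 0, θ ≥ 0 with γ₁⁻¹ − (γ₂/4)θ²‖L‖² > 0. Define S₁, S₂ : K → K by S₁(x, y) = (γ₁⁻¹x + (1−θ)L*y, (1−θ)Lx + γ₂⁻¹y + γ₁(1−θ)(2−θ)LL*y) and S₂(x, y) = (γ₁⁻¹x + γ₂(2−θ)L*Lx − L*y, −Lx + γ₂⁻¹y). Then S₁ and S₂ are strongly positive: there exists c > 0 with ⟨z, S₁ z⟩ ≥ c‖z‖² and ⟨z, S₂ z⟩ ≥ c‖z‖² for all z ∈ K. Consequently, for every μ ∈ [0, 1] the operator S = (μ S₁⁻¹ + (1 − μ) S₂⁻¹)⁻¹ is a well-defined strongly positive self-adjoint bounded linear operator on K. -/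

import Mathlib

open scoped InnerProductSpace

set_option maxHeartbeats 1600000

namespace SOpsAux

lemma trivKey (p q : ℝ) : ∀ a n : ℝ, min p q * (a ^ 2 + n ^ 2) ≤ p * a ^ 2 + q * n ^ 2 := by
  intro a n
  have h1 := mul_le_mul_of_nonneg_right (min_le_left p q) (sq_nonneg a)
  have h2 := mul_le_mul_of_nonneg_right (min_le_right p q) (sq_nonneg n)
  nlinarith [h1, h2]

lemma quadKey (p q k α : ℝ) (hp : 0 < p) (hq : 0 < q) (hk : 0 < k)
    (hD : 1 < α + p * q / k ^ 2) :
    ∃ c > (0:ℝ), ∀ a n w τ : ℝ, 0 ≤ a → 0 ≤ n → 0 ≤ w → w ≤ k * a → |τ| ≤ w * n →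
      c * (a ^ 2 + n ^ 2) ≤ p * a ^ 2 + q * n ^ 2 - 2 * τ + α / q * w ^ 2 := by
  have hk2 : (0:ℝ) < k ^ 2 := by positivity
  obtain ⟨M, hMdef⟩ : ∃ M : ℝ, M = p * q / k ^ 2 := ⟨_, rfl⟩
  have hM : 0 < M := by rw [hMdef]; positivity
  obtain ⟨D, hDdef⟩ : ∃ D : ℝ, D = α + M - 1 := ⟨_, rfl⟩
  have hD0 : 0 < D := by rw [hDdef, hMdef]; linarith
  obtain ⟨η, hηdef⟩ : ∃ η : ℝ, η = D / (4 * (1 + D + M)) := ⟨_, rfl⟩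
  have hden : (0:ℝ) < 4 * (1 + D + M) := by positivity
  have hη0 : 0 < η := by rw [hηdef]; positivity
  have hη1 : η < 1 := by
    rw [hηdef, div_lt_one hden]; linarith
  have h1η : 0 < 1 - η := by linarith
  have hcore : 1 ≤ (1 - η) * α + (1 - η) ^ 2 * M := by
    have h5 : η * (1 + D + M) = D / 4 := by
      rw [hηdef]; field_simp
    have hα : α = 1 + D - M := by rw [hDdef]; ring
    rw [hα]
    nlinarith [h5, mul_nonneg (mul_nonneg hη0.le hη0.le) hM.le]
  refine ⟨η * min p q, by positivity, ?_⟩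
  intro a n w τ ha hn hw hwk hτ
  have hτ1 : τ ≤ w * n := (abs_le.mp hτ).2
  have hw2 : w ^ 2 ≤ k ^ 2 * a ^ 2 := by nlinarith
  have hminpos : 0 < min p q := lt_min hp hq
  have hAB : 1 ≤ ((1 - η) * q) * (α / q + (1 - η) * p / k ^ 2) := by
    have heq : ((1 - η) * q) * (α / q + (1 - η) * p / k ^ 2) = (1 - η) * α + (1 - η) ^ 2 * M := by
      rw [hMdef]; field_simp
    rw [heq]; exact hcore
  have key2 : 0 ≤ (1 - η) * q * n ^ 2 - 2 * (w * n) + (α / q + (1 - η) * p / k ^ 2) * w ^ 2 := by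
    nlinarith [sq_nonneg ((1 - η) * q * n - w), hAB, sq_nonneg w, mul_pos h1η hq]
  have key3 : (1 - η) * p / k ^ 2 * w ^ 2 ≤ (1 - η) * p * a ^ 2 := by
    rw [div_mul_eq_mul_div, div_le_iff₀ hk2]
    calc (1 - η) * p * w ^ 2 ≤ (1 - η) * p * (k ^ 2 * a ^ 2) := by
          exact mul_le_mul_of_nonneg_left hw2 (by positivity)
      _ = (1 - η) * p * a ^ 2 * k ^ 2 := by ring
  have hstep : η * min p q * (a ^ 2 + n ^ 2) ≤ η * p * a ^ 2 + η * q * n ^ 2 := by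
    have h1 : η * (min p q * a ^ 2) ≤ η * (p * a ^ 2) :=
      mul_le_mul_of_nonneg_left (mul_le_mul_of_nonneg_right (min_le_left p q) (sq_nonneg a)) hη0.le
    have h2 : η * (min p q * n ^ 2) ≤ η * (q * n ^ 2) :=
      mul_le_mul_of_nonneg_left (mul_le_mul_of_nonneg_right (min_le_right p q) (sq_nonneg n)) hη0.le
    linarith [h1, h2]
  linarith [key2, key3, hτ1, hstep]

lemma Q1key (γ₁ γ₂ θ k : ℝ) (hγ₁ : 0 < γ₁) (hγ₂ : 0 < γ₂) (hk : 0 ≤ k)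
    (hcond : 0 < γ₁⁻¹ - γ₂ / 4 * θ ^ 2 * k ^ 2) :
    ∃ c > (0:ℝ), ∀ a n b t : ℝ, 0 ≤ a → 0 ≤ n → 0 ≤ b → b ≤ k * n → |t| ≤ a * b →
      c * (a ^ 2 + n ^ 2) ≤
        γ₁⁻¹ * a ^ 2 + 2 * (1 - θ) * t + γ₂⁻¹ * n ^ 2 + γ₁ * (1 - θ) * (2 - θ) * b ^ 2 := by
  have hp : (0:ℝ) < γ₁⁻¹ := by positivity
  have hq : (0:ℝ) < γ₂⁻¹ := by positivity
  have hγ₂q : γ₂ * γ₂⁻¹ = 1 := mul_inv_cancel₀ hγ₂.ne'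
  have hpq : θ ^ 2 * k ^ 2 / 4 < γ₁⁻¹ * γ₂⁻¹ := by
    have := mul_lt_mul_of_pos_right hcond hq
    nlinarith [this]
  by_cases hθ1 : θ = 1
  · refine ⟨min γ₁⁻¹ γ₂⁻¹, lt_min hp hq, ?_⟩
    intro a n b t ha hn hb hbk hT
    subst hθ1
    have := trivKey γ₁⁻¹ γ₂⁻¹ a n
    nlinarith [this]
  by_cases hk0 : k = 0
  · refine ⟨min γ₁⁻¹ γ₂⁻¹, lt_min hp hq, ?_⟩
    intro a n b t ha hn hb hbk hT
    have hb0 : b = 0 := le_antisymm (by simpa [hk0] using hbk) hb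
    have ht0 : t = 0 := by
      have : |t| ≤ 0 := by simpa [hb0] using hT
      simpa using le_antisymm this (abs_nonneg t)
    subst hb0; subst ht0
    have := trivKey γ₁⁻¹ γ₂⁻¹ a n
    nlinarith [this]
  · have hkpos : 0 < k := lt_of_le_of_ne hk (Ne.symm hk0)
    have hs : (1 - θ) ≠ 0 := by intro h; apply hθ1; linarith
    have hs2 : 0 < (1 - θ) ^ 2 := by positivity
    have hk' : 0 < |1 - θ| * k := by positivity
    have habs2 : (|1 - θ| * k) ^ 2 = (1 - θ) ^ 2 * k ^ 2 := by
      rw [mul_pow, sq_abs]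
    have hD : 1 < (1 + (1 - θ)⁻¹) + γ₂⁻¹ * γ₁⁻¹ / (|1 - θ| * k) ^ 2 := by
      rw [habs2]
      rcases lt_or_gt_of_ne hs with hneg | hpos
      · have hu : 0 < θ - 1 := by linarith
        have hinv : (1 - θ)⁻¹ = -(θ - 1)⁻¹ := by
          rw [show (1 - θ) = -(θ - 1) by ring, neg_inv]
        have hquot : γ₂⁻¹ * γ₁⁻¹ / ((1 - θ) ^ 2 * k ^ 2) > (θ - 1)⁻¹ := by
          rw [gt_iff_lt, lt_div_iff₀ (by positivity)]
          rw [inv_mul_lt_iff₀ hu]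
          nlinarith [hpq, sq_nonneg (θ - 2), mul_pos hu (mul_pos hs2 (by positivity : (0:ℝ) < k ^ 2))]
        rw [hinv]; linarith
      · have h1 : 0 < (1 - θ)⁻¹ := by positivity
        have h2 : 0 < γ₂⁻¹ * γ₁⁻¹ / ((1 - θ) ^ 2 * k ^ 2) := by positivity
        linarith
    obtain ⟨c, hc, H⟩ := quadKey γ₂⁻¹ γ₁⁻¹ (|1 - θ| * k) (1 + (1 - θ)⁻¹) hq hp hk' hD
    refine ⟨c, hc, ?_⟩
    intro a n b t ha hn hb hbk hT
    have hw : |1 - θ| * b ≤ |1 - θ| * k * n := by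
      rw [mul_assoc]
      exact mul_le_mul_of_nonneg_left hbk (abs_nonneg _)
    have hτ : |(-((1 - θ) * t))| ≤ |1 - θ| * b * a := by
      rw [abs_neg, abs_mul]
      calc |1 - θ| * |t| ≤ |1 - θ| * (a * b) := mul_le_mul_of_nonneg_left hT (abs_nonneg _)
        _ = |1 - θ| * b * a := by ring
    have := H n a (|1 - θ| * b) (-((1 - θ) * t)) hn ha (by positivity) hw hτ
    have hrw : γ₂⁻¹ * n ^ 2 + γ₁⁻¹ * a ^ 2 - 2 * (-((1 - θ) * t)) +
        (1 + (1 - θ)⁻¹) / γ₁⁻¹ * (|1 - θ| * b) ^ 2 =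
        γ₁⁻¹ * a ^ 2 + 2 * (1 - θ) * t + γ₂⁻¹ * n ^ 2 + γ₁ * (1 - θ) * (2 - θ) * b ^ 2 := by
      have hX : (1 + (1 - θ)⁻¹) * (1 - θ) ^ 2 = (1 - θ) * (2 - θ) := by
        field_simp
        ring
      rw [mul_pow, sq_abs, div_eq_mul_inv, inv_inv]
      calc γ₂⁻¹ * n ^ 2 + γ₁⁻¹ * a ^ 2 - 2 * -((1 - θ) * t) +
          (1 + (1 - θ)⁻¹) * γ₁ * ((1 - θ) ^ 2 * b ^ 2)
          = γ₂⁻¹ * n ^ 2 + γ₁⁻¹ * a ^ 2 + 2 * (1 - θ) * t +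
            γ₁ * ((1 + (1 - θ)⁻¹) * (1 - θ) ^ 2) * b ^ 2 := by ring
        _ = γ₁⁻¹ * a ^ 2 + 2 * (1 - θ) * t + γ₂⁻¹ * n ^ 2 + γ₁ * (1 - θ) * (2 - θ) * b ^ 2 := by
            rw [hX]; ring
    rw [hrw] at this
    linarith [this]

lemma Q2key (γ₁ γ₂ θ k : ℝ) (hγ₁ : 0 < γ₁) (hγ₂ : 0 < γ₂) (hk : 0 ≤ k)
    (hcond : 0 < γ₁⁻¹ - γ₂ / 4 * θ ^ 2 * k ^ 2) :
    ∃ c > (0:ℝ), ∀ a n w τ : ℝ, 0 ≤ a → 0 ≤ n → 0 ≤ w → w ≤ k * a → |τ| ≤ w * n →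
      c * (a ^ 2 + n ^ 2) ≤
        γ₁⁻¹ * a ^ 2 + γ₂⁻¹ * n ^ 2 - 2 * τ + γ₂ * (2 - θ) * w ^ 2 := by
  have hp : (0:ℝ) < γ₁⁻¹ := by positivity
  have hq : (0:ℝ) < γ₂⁻¹ := by positivity
  have hpq : θ ^ 2 * k ^ 2 / 4 < γ₁⁻¹ * γ₂⁻¹ := by
    have := mul_lt_mul_of_pos_right hcond hq
    have hγ₂q : γ₂ * γ₂⁻¹ = 1 := mul_inv_cancel₀ hγ₂.ne'
    nlinarith [this]
  by_cases hk0 : k = 0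
  · refine ⟨min γ₁⁻¹ γ₂⁻¹, lt_min hp hq, ?_⟩
    intro a n w τ ha hn hw hwk hT
    have hw0 : w = 0 := le_antisymm (by simpa [hk0] using hwk) hw
    have ht0 : τ = 0 := by
      have : |τ| ≤ 0 := by simpa [hw0] using hT
      simpa using le_antisymm this (abs_nonneg τ)
    subst hw0; subst ht0
    have := trivKey γ₁⁻¹ γ₂⁻¹ a n
    nlinarith [this]
  · have hkpos : 0 < k := lt_of_le_of_ne hk (Ne.symm hk0)
    have hD : 1 < (2 - θ) + γ₁⁻¹ * γ₂⁻¹ / k ^ 2 := by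
      have h1 : θ ^ 2 / 4 < γ₁⁻¹ * γ₂⁻¹ / k ^ 2 := by
        rw [lt_div_iff₀ (by positivity)]
        nlinarith [hpq]
      nlinarith [sq_nonneg (θ - 2), h1]
    obtain ⟨c, hc, H⟩ := quadKey γ₁⁻¹ γ₂⁻¹ k (2 - θ) hp hq hkpos hD
    refine ⟨c, hc, ?_⟩
    intro a n w τ ha hn hw hwk hT
    have := H a n w τ ha hn hw hwk hT
    have hrw : (2 - θ) / γ₂⁻¹ * w ^ 2 = γ₂ * (2 - θ) * w ^ 2 := by
      rw [div_eq_mul_inv, inv_inv]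
      ring
    rw [hrw] at this
    linarith [this]

lemma exists_inverse {E : Type*} [NormedAddCommGroup E] [InnerProductSpace ℝ E]
    [CompleteSpace E] (A : E →L[ℝ] E) (c : ℝ) (hc : 0 < c)
    (hcoer : ∀ z, c * ‖z‖ ^ 2 ≤ ⟪A z, z⟫_ℝ) :
    ∃ T : E →L[ℝ] E, (∀ z, A (T z) = z) ∧ (∀ z, T (A z) = z) ∧
      (∃ c' > (0:ℝ), ∀ z, c' * ‖z‖ ^ 2 ≤ ⟪T z, z⟫_ℝ) ∧
      ((∀ z w, ⟪A z, w⟫_ℝ = ⟪z, A w⟫_ℝ) → ∀ z w, ⟪T z, w⟫_ℝ = ⟪z, T w⟫_ℝ) := by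
  set B : E →L[ℝ] E →L[ℝ] ℝ := (innerSL ℝ).comp A with hB
  have hBapp : ∀ v w, B v w = ⟪A v, w⟫_ℝ := fun v w => rfl
  have coercive : IsCoercive B := by
    refine ⟨c, hc, fun u => ?_⟩
    rw [hBapp]
    calc c * ‖u‖ * ‖u‖ = c * ‖u‖ ^ 2 := by ring
      _ ≤ ⟪A u, u⟫_ℝ := hcoer u
  set eqv := coercive.continuousLinearEquivOfBilin with heqv
  have heq : ∀ v, eqv v = A v := by
    intro v
    apply ext_inner_right ℝ
    intro w
    rw [coercive.continuousLinearEquivOfBilin_apply v w, hBapp]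
  refine ⟨eqv.symm.toContinuousLinearMap, ?_, ?_, ?_, ?_⟩
  · intro z
    rw [ContinuousLinearEquiv.coe_coe, ← heq (eqv.symm z)]
    exact eqv.apply_symm_apply z
  · intro z
    rw [ContinuousLinearEquiv.coe_coe, ← heq z]
    exact eqv.symm_apply_apply z
  · refine ⟨c / (‖A‖ + 1) ^ 2, by positivity, fun z => ?_⟩
    set T := eqv.symm.toContinuousLinearMap with hT
    have hAT : A (T z) = z := by
      rw [hT, ContinuousLinearEquiv.coe_coe, ← heq (eqv.symm z)]
      exact eqv.apply_symm_apply z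
    have h1 : c * ‖T z‖ ^ 2 ≤ ⟪T z, z⟫_ℝ := by
      calc c * ‖T z‖ ^ 2 ≤ ⟪A (T z), T z⟫_ℝ := hcoer (T z)
        _ = ⟪T z, A (T z)⟫_ℝ := real_inner_comm _ _
        _ = ⟪T z, z⟫_ℝ := by rw [hAT]
    have h2 : ‖z‖ ≤ (‖A‖ + 1) * ‖T z‖ := by
      calc ‖z‖ = ‖A (T z)‖ := by rw [hAT]
        _ ≤ ‖A‖ * ‖T z‖ := A.le_opNorm (T z)
        _ ≤ (‖A‖ + 1) * ‖T z‖ := by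
            have := norm_nonneg (T z); nlinarith
    have h3 : ‖z‖ ^ 2 ≤ (‖A‖ + 1) ^ 2 * ‖T z‖ ^ 2 := by
      have h0 : (0:ℝ) ≤ (‖A‖ + 1) * ‖T z‖ := by positivity
      nlinarith [norm_nonneg z]
    have hA1 : (0:ℝ) < (‖A‖ + 1) ^ 2 := by positivity
    rw [div_mul_eq_mul_div, div_le_iff₀ hA1]
    calc c * ‖z‖ ^ 2 ≤ c * ((‖A‖ + 1) ^ 2 * ‖T z‖ ^ 2) :=
          mul_le_mul_of_nonneg_left h3 hc.le
      _ = c * ‖T z‖ ^ 2 * (‖A‖ + 1) ^ 2 := by ring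
      _ ≤ ⟪T z, z⟫_ℝ * (‖A‖ + 1) ^ 2 := mul_le_mul_of_nonneg_right h1 hA1.le
  · intro hsym z w
    set T := eqv.symm.toContinuousLinearMap with hT
    have hAT : ∀ v, A (T v) = v := by
      intro v
      rw [hT, ContinuousLinearEquiv.coe_coe, ← heq (eqv.symm v)]
      exact eqv.apply_symm_apply v
    calc ⟪T z, w⟫_ℝ = ⟪T z, A (T w)⟫_ℝ := by rw [hAT]
      _ = ⟪A (T z), T w⟫_ℝ := (hsym (T z) (T w)).symm
      _ = ⟪z, T w⟫_ℝ := by rw [hAT]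

end SOpsAux

/-- Lemma 5.5: strong positivity of `S₁`, `S₂` and well-definedness and strong positivity
of `S = (μ S₁⁻¹ + (1 − μ) S₂⁻¹)⁻¹` on `K = H × G`, where the inner product on `K` is
`⟨(x,y),(x',y')⟩ = ⟨x,x'⟩ + ⟨y,y'⟩` and `‖(x,y)‖² = ‖x‖² + ‖y‖²`. -/
theorem S_operators_strongly_positive
    {H G : Type*} [NormedAddCommGroup H] [InnerProductSpace ℝ H] [CompleteSpace H]
    [NormedAddCommGroup G] [InnerProductSpace ℝ G] [CompleteSpace G]
    (L : H →L[ℝ] G) (γ₁ γ₂ θ : ℝ) (hγ₁ : 0 < γ₁) (hγ₂ : 0 < γ₂) (hθ : 0 ≤ θ)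
    (hcond : 0 < γ₁⁻¹ - γ₂ / 4 * θ ^ 2 * ‖L‖ ^ 2)
    (S₁ S₂ : H × G → H × G)
    (hS₁ : ∀ z : H × G, S₁ z =
      (γ₁⁻¹ • z.1 + (1 - θ) • (ContinuousLinearMap.adjoint L) z.2,
       (1 - θ) • L z.1 + γ₂⁻¹ • z.2 +
         (γ₁ * (1 - θ) * (2 - θ)) • L ((ContinuousLinearMap.adjoint L) z.2)))
    (hS₂ : ∀ z : H × G, S₂ z =
      (γ₁⁻¹ • z.1 + (γ₂ * (2 - θ)) • (ContinuousLinearMap.adjoint L) (L z.1)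
         - (ContinuousLinearMap.adjoint L) z.2,
       -(L z.1) + γ₂⁻¹ • z.2)) :
    (∃ c > (0:ℝ), ∀ z : H × G,
      c * (‖z.1‖ ^ 2 + ‖z.2‖ ^ 2) ≤ ⟪z.1, (S₁ z).1⟫_ℝ + ⟪z.2, (S₁ z).2⟫_ℝ ∧
      c * (‖z.1‖ ^ 2 + ‖z.2‖ ^ 2) ≤ ⟪z.1, (S₂ z).1⟫_ℝ + ⟪z.2, (S₂ z).2⟫_ℝ) ∧
    (∀ μ : ℝ, μ ∈ Set.Icc (0:ℝ) 1 →
      ∃ T₁ T₂ Sf : H × G → H × G,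
        (∀ z, S₁ (T₁ z) = z ∧ T₁ (S₁ z) = z) ∧
        (∀ z, S₂ (T₂ z) = z ∧ T₂ (S₂ z) = z) ∧
        (∀ z, μ • T₁ (Sf z) + (1 - μ) • T₂ (Sf z) = z ∧
          Sf (μ • T₁ z + (1 - μ) • T₂ z) = z) ∧
        IsLinearMap ℝ Sf ∧
        (∃ Cb : ℝ, ∀ z : H × G,
          ‖(Sf z).1‖ ^ 2 + ‖(Sf z).2‖ ^ 2 ≤ Cb * (‖z.1‖ ^ 2 + ‖z.2‖ ^ 2)) ∧
        (∀ z w : H × G,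
          ⟪(Sf z).1, w.1⟫_ℝ + ⟪(Sf z).2, w.2⟫_ℝ =
            ⟪z.1, (Sf w).1⟫_ℝ + ⟪z.2, (Sf w).2⟫_ℝ) ∧
        (∃ c' > (0:ℝ), ∀ z : H × G,
          c' * (‖z.1‖ ^ 2 + ‖z.2‖ ^ 2) ≤ ⟪z.1, (Sf z).1⟫_ℝ + ⟪z.2, (Sf z).2⟫_ℝ)) := by
  classical
  obtain ⟨c₁, hc₁, H₁⟩ := SOpsAux.Q1key γ₁ γ₂ θ ‖L‖ hγ₁ hγ₂ (norm_nonneg L) hcond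
  obtain ⟨c₂, hc₂, H₂⟩ := SOpsAux.Q2key γ₁ γ₂ θ ‖L‖ hγ₁ hγ₂ (norm_nonneg L) hcond
  set Lt : G →L[ℝ] H := ContinuousLinearMap.adjoint L with hLt
  have hLtnorm : ∀ y : G, ‖Lt y‖ ≤ ‖L‖ * ‖y‖ := by
    intro y
    calc ‖Lt y‖ ≤ ‖Lt‖ * ‖y‖ := Lt.le_opNorm y
      _ = ‖L‖ * ‖y‖ := by
          rw [hLt]
          congr 1
          exact ContinuousLinearMap.adjoint.norm_map L
  -- expansion of the two quadratic forms
  have expand1 : ∀ z : H × G, ⟪z.1, (S₁ z).1⟫_ℝ + ⟪z.2, (S₁ z).2⟫_ℝ =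
      γ₁⁻¹ * ‖z.1‖ ^ 2 + 2 * (1 - θ) * ⟪z.1, Lt z.2⟫_ℝ + γ₂⁻¹ * ‖z.2‖ ^ 2 +
        γ₁ * (1 - θ) * (2 - θ) * ‖Lt z.2‖ ^ 2 := by
    intro z
    rw [hS₁ z]
    simp only [inner_add_right, real_inner_smul_right]
    rw [real_inner_self_eq_norm_sq, real_inner_self_eq_norm_sq]
    have e1 : ⟪z.2, L z.1⟫_ℝ = ⟪z.1, Lt z.2⟫_ℝ := by
      rw [hLt, ContinuousLinearMap.adjoint_inner_right]
      exact real_inner_comm _ _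
    have e2 : ⟪z.2, L (Lt z.2)⟫_ℝ = ‖Lt z.2‖ ^ 2 := by
      rw [← ContinuousLinearMap.adjoint_inner_left L (Lt z.2) z.2, ← hLt,
        real_inner_self_eq_norm_sq]
    rw [e1, e2]
    ring
  have expand2 : ∀ z : H × G, ⟪z.1, (S₂ z).1⟫_ℝ + ⟪z.2, (S₂ z).2⟫_ℝ =
      γ₁⁻¹ * ‖z.1‖ ^ 2 + γ₂⁻¹ * ‖z.2‖ ^ 2 - 2 * ⟪L z.1, z.2⟫_ℝ +
        γ₂ * (2 - θ) * ‖L z.1‖ ^ 2 := by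
    intro z
    rw [hS₂ z]
    simp only [inner_sub_right, inner_add_right, inner_neg_right, real_inner_smul_right]
    rw [real_inner_self_eq_norm_sq, real_inner_self_eq_norm_sq]
    have e1 : ⟪z.1, Lt (L z.1)⟫_ℝ = ‖L z.1‖ ^ 2 := by
      rw [hLt, ContinuousLinearMap.adjoint_inner_right, real_inner_self_eq_norm_sq]
    have e2 : ⟪z.1, Lt z.2⟫_ℝ = ⟪L z.1, z.2⟫_ℝ := by
      rw [hLt, ContinuousLinearMap.adjoint_inner_right]
    have e3 : ⟪z.2, L z.1⟫_ℝ = ⟪L z.1, z.2⟫_ℝ := real_inner_comm _ _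
    rw [e1, e2, e3]
    ring
  have part1 : ∀ z : H × G,
      min c₁ c₂ * (‖z.1‖ ^ 2 + ‖z.2‖ ^ 2) ≤ ⟪z.1, (S₁ z).1⟫_ℝ + ⟪z.2, (S₁ z).2⟫_ℝ ∧
      min c₁ c₂ * (‖z.1‖ ^ 2 + ‖z.2‖ ^ 2) ≤ ⟪z.1, (S₂ z).1⟫_ℝ + ⟪z.2, (S₂ z).2⟫_ℝ := by
    intro z
    have hmin1 : min c₁ c₂ * (‖z.1‖ ^ 2 + ‖z.2‖ ^ 2) ≤ c₁ * (‖z.1‖ ^ 2 + ‖z.2‖ ^ 2) :=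
      mul_le_mul_of_nonneg_right (min_le_left _ _) (by positivity)
    have hmin2 : min c₁ c₂ * (‖z.1‖ ^ 2 + ‖z.2‖ ^ 2) ≤ c₂ * (‖z.1‖ ^ 2 + ‖z.2‖ ^ 2) :=
      mul_le_mul_of_nonneg_right (min_le_right _ _) (by positivity)
    constructor
    · rw [expand1 z]
      have := H₁ ‖z.1‖ ‖z.2‖ ‖Lt z.2‖ ⟪z.1, Lt z.2⟫_ℝ (norm_nonneg _) (norm_nonneg _)
        (norm_nonneg _) (hLtnorm z.2) (abs_real_inner_le_norm _ _)
      linarith [this, hmin1]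
    · rw [expand2 z]
      have := H₂ ‖z.1‖ ‖z.2‖ ‖L z.1‖ ⟪L z.1, z.2⟫_ℝ (norm_nonneg _) (norm_nonneg _)
        (norm_nonneg _) (L.le_opNorm z.1) (abs_real_inner_le_norm _ _)
      linarith [this, hmin2]
  refine ⟨⟨min c₁ c₂, lt_min hc₁ hc₂, part1⟩, ?_⟩
  -- Part 2
  intro μ hμ
  obtain ⟨hμ0, hμ1⟩ := hμ
  -- the operators as continuous linear maps
  obtain ⟨A₁, hA₁⟩ : ∃ A : (H × G) →L[ℝ] (H × G), ∀ z, A z = S₁ z := by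
    refine ⟨(γ₁⁻¹ • ContinuousLinearMap.fst ℝ H G +
        (1 - θ) • (Lt.comp (ContinuousLinearMap.snd ℝ H G))).prod
      ((1 - θ) • (L.comp (ContinuousLinearMap.fst ℝ H G)) +
        γ₂⁻¹ • ContinuousLinearMap.snd ℝ H G +
        (γ₁ * (1 - θ) * (2 - θ)) • ((L.comp Lt).comp (ContinuousLinearMap.snd ℝ H G))), ?_⟩
    intro z
    rw [hS₁ z]
    rfl
  obtain ⟨A₂, hA₂⟩ : ∃ A : (H × G) →L[ℝ] (H × G), ∀ z, A z = S₂ z := by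
    refine ⟨(γ₁⁻¹ • ContinuousLinearMap.fst ℝ H G +
        (γ₂ * (2 - θ)) • ((Lt.comp L).comp (ContinuousLinearMap.fst ℝ H G)) -
        Lt.comp (ContinuousLinearMap.snd ℝ H G)).prod
      (-(L.comp (ContinuousLinearMap.fst ℝ H G)) +
        γ₂⁻¹ • ContinuousLinearMap.snd ℝ H G), ?_⟩
    intro z
    rw [hS₂ z]
    rfl
  -- symmetry of the bilinear forms
  have inner_expand₁ : ∀ z w : H × G, ⟪(S₁ z).1, w.1⟫_ℝ + ⟪(S₁ z).2, w.2⟫_ℝ =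
      γ₁⁻¹ * ⟪z.1, w.1⟫_ℝ + (1 - θ) * ⟪z.2, L w.1⟫_ℝ + (1 - θ) * ⟪L z.1, w.2⟫_ℝ +
        γ₂⁻¹ * ⟪z.2, w.2⟫_ℝ + γ₁ * (1 - θ) * (2 - θ) * ⟪Lt z.2, Lt w.2⟫_ℝ := by
    intro z w
    rw [hS₁ z]
    simp only [inner_add_left, real_inner_smul_left]
    have e1 : ⟪Lt z.2, w.1⟫_ℝ = ⟪z.2, L w.1⟫_ℝ := by
      rw [hLt, ContinuousLinearMap.adjoint_inner_left]
    have e2 : ⟪L (Lt z.2), w.2⟫_ℝ = ⟪Lt z.2, Lt w.2⟫_ℝ := by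
      conv_rhs => rw [hLt, ContinuousLinearMap.adjoint_inner_right]
    rw [e1, e2]
    ring
  have hsymS₁ : ∀ z w : H × G, ⟪(S₁ z).1, w.1⟫_ℝ + ⟪(S₁ z).2, w.2⟫_ℝ =
      ⟪z.1, (S₁ w).1⟫_ℝ + ⟪z.2, (S₁ w).2⟫_ℝ := by
    intro z w
    rw [real_inner_comm (S₁ w).1 z.1, real_inner_comm (S₁ w).2 z.2,
      inner_expand₁ z w, inner_expand₁ w z,
      real_inner_comm z.1 w.1, real_inner_comm (L z.1) w.2, real_inner_comm z.2 (L w.1),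
      real_inner_comm z.2 w.2, real_inner_comm (Lt z.2) (Lt w.2)]
    ring
  have inner_expand₂ : ∀ z w : H × G, ⟪(S₂ z).1, w.1⟫_ℝ + ⟪(S₂ z).2, w.2⟫_ℝ =
      γ₁⁻¹ * ⟪z.1, w.1⟫_ℝ + γ₂ * (2 - θ) * ⟪L z.1, L w.1⟫_ℝ - ⟪z.2, L w.1⟫_ℝ -
        ⟪L z.1, w.2⟫_ℝ + γ₂⁻¹ * ⟪z.2, w.2⟫_ℝ := by
    intro z w
    rw [hS₂ z]
    simp only [inner_add_left, inner_sub_left, inner_neg_left, real_inner_smul_left]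
    have e1 : ⟪Lt (L z.1), w.1⟫_ℝ = ⟪L z.1, L w.1⟫_ℝ := by
      rw [hLt, ContinuousLinearMap.adjoint_inner_left]
    have e2 : ⟪Lt z.2, w.1⟫_ℝ = ⟪z.2, L w.1⟫_ℝ := by
      rw [hLt, ContinuousLinearMap.adjoint_inner_left]
    rw [e1, e2]
    ring
  have hsymS₂ : ∀ z w : H × G, ⟪(S₂ z).1, w.1⟫_ℝ + ⟪(S₂ z).2, w.2⟫_ℝ =
      ⟪z.1, (S₂ w).1⟫_ℝ + ⟪z.2, (S₂ w).2⟫_ℝ := by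
    intro z w
    rw [real_inner_comm (S₂ w).1 z.1, real_inner_comm (S₂ w).2 z.2,
      inner_expand₂ z w, inner_expand₂ w z,
      real_inner_comm z.1 w.1, real_inner_comm (L z.1) (L w.1), real_inner_comm (L z.1) w.2,
      real_inner_comm z.2 (L w.1), real_inner_comm z.2 w.2]
    ring
  -- pass to the L2 product space
  let e : WithLp 2 (H × G) ≃L[ℝ] H × G := WithLp.prodContinuousLinearEquiv 2 ℝ H G
  obtain ⟨B1, hB1app⟩ : ∃ B : WithLp 2 (H × G) →L[ℝ] WithLp 2 (H × G),
      ∀ v, B v = e.symm (A₁ (e v)) :=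
    ⟨(e.symm.toContinuousLinearMap).comp (A₁.comp e.toContinuousLinearMap), fun _ => rfl⟩
  obtain ⟨B2, hB2app⟩ : ∃ B : WithLp 2 (H × G) →L[ℝ] WithLp 2 (H × G),
      ∀ v, B v = e.symm (A₂ (e v)) :=
    ⟨(e.symm.toContinuousLinearMap).comp (A₂.comp e.toContinuousLinearMap), fun _ => rfl⟩
  have efst : ∀ x : H × G, ((e.symm x : WithLp 2 (H × G))).fst = x.1 := fun _ => rfl
  have esnd : ∀ x : H × G, ((e.symm x : WithLp 2 (H × G))).snd = x.2 := fun _ => rfl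
  have eafst : ∀ v : WithLp 2 (H × G), ((e v : H × G)).1 = v.fst := fun _ => rfl
  have easnd : ∀ v : WithLp 2 (H × G), ((e v : H × G)).2 = v.snd := fun _ => rfl
  -- coercivity of the lifted operators
  have hcoer : ∀ (A : (H × G) →L[ℝ] (H × G)) (S : H × G → H × G)
      (Bop : WithLp 2 (H × G) →L[ℝ] WithLp 2 (H × G)) (c : ℝ),
      (∀ z, A z = S z) → (∀ v, Bop v = e.symm (A (e v))) →
      (∀ z : H × G, c * (‖z.1‖ ^ 2 + ‖z.2‖ ^ 2) ≤ ⟪z.1, (S z).1⟫_ℝ + ⟪z.2, (S z).2⟫_ℝ) →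
      ∀ v : WithLp 2 (H × G), c * ‖v‖ ^ 2 ≤ ⟪Bop v, v⟫_ℝ := by
    intro A S Bop c hAS hBop hpos v
    have h := hpos (e v)
    rw [← hAS (e v)] at h
    rw [WithLp.prod_norm_sq_eq_of_L2 v, WithLp.prod_inner_apply, hBop v]
    simp only [WithLp.ofLp_fst, WithLp.ofLp_snd]
    rw [efst, esnd]
    rw [eafst, easnd] at h
    have c1 : ⟪v.fst, (A (e v)).1⟫_ℝ = ⟪(A (e v)).1, v.fst⟫_ℝ := real_inner_comm _ _
    have c2 : ⟪v.snd, (A (e v)).2⟫_ℝ = ⟪(A (e v)).2, v.snd⟫_ℝ := real_inner_comm _ _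
    rw [c1, c2] at h
    exact h
  have hcoer₁ := hcoer A₁ S₁ B1 (min c₁ c₂) hA₁ hB1app (fun z => (part1 z).1)
  have hcoer₂ := hcoer A₂ S₂ B2 (min c₁ c₂) hA₂ hB2app (fun z => (part1 z).2)
  -- symmetry of the lifted operators
  have hsymlift : ∀ (A : (H × G) →L[ℝ] (H × G)) (S : H × G → H × G)
      (Bop : WithLp 2 (H × G) →L[ℝ] WithLp 2 (H × G)),
      (∀ z, A z = S z) → (∀ v, Bop v = e.symm (A (e v))) →
      (∀ z w : H × G, ⟪(S z).1, w.1⟫_ℝ + ⟪(S z).2, w.2⟫_ℝ =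
        ⟪z.1, (S w).1⟫_ℝ + ⟪z.2, (S w).2⟫_ℝ) →
      ∀ v w : WithLp 2 (H × G), ⟪Bop v, w⟫_ℝ = ⟪v, Bop w⟫_ℝ := by
    intro A S Bop hAS hBop hsym v w
    rw [WithLp.prod_inner_apply, WithLp.prod_inner_apply, hBop v, hBop w]
    simp only [WithLp.ofLp_fst, WithLp.ofLp_snd]
    rw [efst, esnd, efst, esnd,
      hAS (e v), hAS (e w)]
    rw [← eafst v, ← easnd v, ← eafst w, ← easnd w]
    exact hsym (e v) (e w)
  have hsymB1 := hsymlift A₁ S₁ B1 hA₁ hB1app hsymS₁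
  have hsymB2 := hsymlift A₂ S₂ B2 hA₂ hB2app hsymS₂
  -- invert
  obtain ⟨U1, hT₁l, hT₁r, ⟨c₁', hc₁', hT₁coer⟩, hT₁sym'⟩ :=
    SOpsAux.exists_inverse B1 (min c₁ c₂) (lt_min hc₁ hc₂) hcoer₁
  obtain ⟨U2, hT₂l, hT₂r, ⟨c₂', hc₂', hT₂coer⟩, hT₂sym'⟩ :=
    SOpsAux.exists_inverse B2 (min c₁ c₂) (lt_min hc₁ hc₂) hcoer₂
  have hT₁sym := hT₁sym' hsymB1
  have hT₂sym := hT₂sym' hsymB2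
  -- the convex combination of the inverses
  obtain ⟨M, hMapp⟩ : ∃ M : WithLp 2 (H × G) →L[ℝ] WithLp 2 (H × G),
      ∀ v, M v = μ • U1 v + (1 - μ) • U2 v :=
    ⟨μ • U1 + (1 - μ) • U2, fun _ => rfl⟩
  have hcoerM : ∀ v, min c₁' c₂' * ‖v‖ ^ 2 ≤ ⟪M v, v⟫_ℝ := by
    intro v
    have h1 := hT₁coer v
    have h2 := hT₂coer v
    have hinner : ⟪M v, v⟫_ℝ = μ * ⟪U1 v, v⟫_ℝ + (1 - μ) * ⟪U2 v, v⟫_ℝ := by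
      rw [hMapp v, inner_add_left, real_inner_smul_left, real_inner_smul_left]
    have p1 : 0 ≤ μ * (⟪U1 v, v⟫_ℝ - c₁' * ‖v‖ ^ 2) := mul_nonneg hμ0 (by linarith)
    have p2 : 0 ≤ (1 - μ) * (⟪U2 v, v⟫_ℝ - c₂' * ‖v‖ ^ 2) :=
      mul_nonneg (by linarith) (by linarith)
    have q1 : 0 ≤ μ * ((c₁' - min c₁' c₂') * ‖v‖ ^ 2) :=
      mul_nonneg hμ0 (mul_nonneg (by linarith [min_le_left c₁' c₂']) (sq_nonneg _))
    have q2 : 0 ≤ (1 - μ) * ((c₂' - min c₁' c₂') * ‖v‖ ^ 2) :=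
      mul_nonneg (by linarith) (mul_nonneg (by linarith [min_le_right c₁' c₂']) (sq_nonneg _))
    nlinarith [hinner, p1, p2, q1, q2]
  have hsymM : ∀ v w, ⟪M v, w⟫_ℝ = ⟪v, M w⟫_ℝ := by
    intro v w
    rw [hMapp v, hMapp w, inner_add_left, inner_add_right, real_inner_smul_left,
      real_inner_smul_left, real_inner_smul_right, real_inner_smul_right,
      hT₁sym v w, hT₂sym v w]
  obtain ⟨Sh, hShl, hShr, ⟨c'', hc'', hShcoer⟩, hShsym'⟩ :=
    SOpsAux.exists_inverse M (min c₁' c₂') (lt_min hc₁' hc₂') hcoerM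
  have hShsym := hShsym' hsymM
  -- package everything back on H × G
  refine ⟨fun z => e (U1 (e.symm z)), fun z => e (U2 (e.symm z)), fun z => e (Sh (e.symm z)),
    ?_, ?_, ?_, ?_, ?_, ?_, ?_⟩
  · -- S₁ inverse
    intro z
    constructor
    · rw [← hA₁]
      calc A₁ (e (U1 (e.symm z))) = e (e.symm (A₁ (e (U1 (e.symm z))))) :=
            (e.apply_symm_apply _).symm
        _ = e (B1 (U1 (e.symm z))) := by rw [← hB1app]
        _ = e (e.symm z) := by rw [hT₁l]
        _ = z := e.apply_symm_apply z
    · rw [← hA₁]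
      show e (U1 (e.symm (A₁ z))) = z
      have h : e.symm (A₁ z) = B1 (e.symm z) := by
        rw [hB1app (e.symm z), e.apply_symm_apply]
      rw [h, hT₁r, e.apply_symm_apply]
  · -- S₂ inverse
    intro z
    constructor
    · rw [← hA₂]
      calc A₂ (e (U2 (e.symm z))) = e (e.symm (A₂ (e (U2 (e.symm z))))) :=
            (e.apply_symm_apply _).symm
        _ = e (B2 (U2 (e.symm z))) := by rw [← hB2app]
        _ = e (e.symm z) := by rw [hT₂l]
        _ = z := e.apply_symm_apply z
    · rw [← hA₂]
      show e (U2 (e.symm (A₂ z))) = z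
      have h : e.symm (A₂ z) = B2 (e.symm z) := by
        rw [hB2app (e.symm z), e.apply_symm_apply]
      rw [h, hT₂r, e.apply_symm_apply]
  · -- Sf is the inverse of the convex combination
    intro z
    constructor
    · calc μ • e (U1 (e.symm (e (Sh (e.symm z))))) +
          (1 - μ) • e (U2 (e.symm (e (Sh (e.symm z)))))
          = μ • e (U1 (Sh (e.symm z))) + (1 - μ) • e (U2 (Sh (e.symm z))) := by
            rw [e.symm_apply_apply]
        _ = e (μ • U1 (Sh (e.symm z)) + (1 - μ) • U2 (Sh (e.symm z))) := by
            rw [map_add, map_smul, map_smul]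
        _ = e (M (Sh (e.symm z))) := by rw [← hMapp]
        _ = e (e.symm z) := by rw [hShl]
        _ = z := e.apply_symm_apply z
    · calc e (Sh (e.symm (μ • e (U1 (e.symm z)) + (1 - μ) • e (U2 (e.symm z)))))
          = e (Sh (μ • e.symm (e (U1 (e.symm z))) + (1 - μ) • e.symm (e (U2 (e.symm z))))) := by
            rw [map_add, map_smul, map_smul]
        _ = e (Sh (μ • U1 (e.symm z) + (1 - μ) • U2 (e.symm z))) := by
            rw [e.symm_apply_apply, e.symm_apply_apply]
        _ = e (Sh (M (e.symm z))) := by rw [← hMapp]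
        _ = e (e.symm z) := by rw [hShr]
        _ = z := e.apply_symm_apply z
  · -- linearity
    constructor
    · intro x y
      simp only [map_add]
    · intro a x
      simp only [map_smul]
  · -- boundedness
    refine ⟨(‖Sh‖ + 1) ^ 2, fun z => ?_⟩
    have h1 : ‖Sh (e.symm z)‖ ≤ (‖Sh‖ + 1) * ‖(e.symm z : WithLp 2 (H × G))‖ := by
      calc ‖Sh (e.symm z)‖ ≤ ‖Sh‖ * ‖(e.symm z : WithLp 2 (H × G))‖ := Sh.le_opNorm _
        _ ≤ (‖Sh‖ + 1) * ‖(e.symm z : WithLp 2 (H × G))‖ := by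
            have := norm_nonneg (e.symm z : WithLp 2 (H × G)); nlinarith
    have h2 : ‖Sh (e.symm z)‖ ^ 2 ≤ (‖Sh‖ + 1) ^ 2 * ‖(e.symm z : WithLp 2 (H × G))‖ ^ 2 := by
      have h0 : (0:ℝ) ≤ (‖Sh‖ + 1) * ‖(e.symm z : WithLp 2 (H × G))‖ := by positivity
      nlinarith [norm_nonneg (Sh (e.symm z))]
    have h3 : ‖(e.symm z : WithLp 2 (H × G))‖ ^ 2 = ‖z.1‖ ^ 2 + ‖z.2‖ ^ 2 := by
      rw [WithLp.prod_norm_sq_eq_of_L2, efst, esnd]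
    have h4 : ‖(e (Sh (e.symm z))).1‖ ^ 2 + ‖(e (Sh (e.symm z))).2‖ ^ 2
        = ‖Sh (e.symm z)‖ ^ 2 := by
      rw [eafst, easnd, ← WithLp.prod_norm_sq_eq_of_L2]
    rw [h4]
    rw [h3] at h2
    exact h2
  · -- self-adjointness
    intro z w
    have h := hShsym (e.symm z) (e.symm w)
    rw [WithLp.prod_inner_apply, WithLp.prod_inner_apply] at h
    simp only [WithLp.ofLp_fst, WithLp.ofLp_snd] at h
    rw [efst, esnd, efst, esnd] at h
    rw [← eafst (Sh (e.symm z)), ← easnd (Sh (e.symm z)),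
      ← eafst (Sh (e.symm w)), ← easnd (Sh (e.symm w))] at h
    exact h
  · -- strong positivity of Sf
    refine ⟨c'', hc'', fun z => ?_⟩
    have h := hShcoer (e.symm z)
    rw [WithLp.prod_inner_apply] at h
    simp only [WithLp.ofLp_fst, WithLp.ofLp_snd] at h
    rw [efst, esnd,
      WithLp.prod_norm_sq_eq_of_L2, efst, esnd] at h
    rw [← eafst (Sh (e.symm z)), ← easnd (Sh (e.symm z))] at h
    have c1 : ⟪(e (Sh (e.symm z))).1, z.1⟫_ℝ = ⟪z.1, (e (Sh (e.symm z))).1⟫_ℝ :=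
      real_inner_comm _ _
    have c2 : ⟪(e (Sh (e.symm z))).2, z.2⟫_ℝ = ⟪z.2, (e (Sh (e.symm z))).2⟫_ℝ :=
      real_inner_comm _ _
    rw [c1, c2] at h
    exact h
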